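/- Assume (δ+λ)² ≥ c α λ and φ ≥ 1. Then the function g(x) = x + c/(λ+δ) solves the HJB equation; more precisely, for every x ≥ 0: 1 − g'(x) = 0, sup_{f ≥ 0} ( g(x+f) − g(x) − φ f ) = 0, and c g'(x) − (λ+δ) g(x) + λ ∫₀ˣ g(x−y) α e^{−α y} dy ≤ 0. -/

import Mathlib

open Real Set MeasureTheory

lemma integral_comp (α k x : ℝ) (hα : 0 < α) :
    (∫ y in (0:ℝ)..x, ((x - y) + k) * (α * Real.exp (-α * y)))
      = (1/α - k) * Real.exp (-α * x) - (1/α - (x + k)) := by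
  have h : ∀ y ∈ Set.uIcc (0:ℝ) x,
      HasDerivAt (fun y => (1/α - x - k + y) * Real.exp (-α * y))
        (((x - y) + k) * (α * Real.exp (-α * y))) y := by
    intro y _
    have h1 : HasDerivAt (fun y : ℝ => 1/α - x - k + y) 1 y := by
      simpa using (hasDerivAt_id y).const_add (1/α - x - k)
    have h2 : HasDerivAt (fun y : ℝ => Real.exp (-α * y)) (-α * Real.exp (-α * y)) y := by
      have := ((hasDerivAt_id y).const_mul (-α)).exp
      simpa [mul_comm] using this
    have : HasDerivAt (fun y => (1/α - x - k + y) * Real.exp (-α * y)) _ y := h1.mul h2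
    convert this using 1
    have hα0 : α ≠ 0 := ne_of_gt hα
    field_simp
    ring
  have hint : IntervalIntegrable (fun y => ((x - y) + k) * (α * Real.exp (-α * y)))
      MeasureTheory.volume 0 x := by
    apply Continuous.intervalIntegrable
    continuity
  have := intervalIntegral.integral_eq_sub_of_hasDerivAt h hint
  rw [this]
  simp
  ring

/-- If `(δ+λ)² ≥ cαλ` and `φ ≥ 1`, the function `g(x) = x + c/(λ+δ)`
solves the HJB equation: at every `x ≥ 0`, `1 - g'(x) = 0`, the funding supremum is `0`,
and the integro-differential part is `≤ 0`. -/
theorem linear_function_solves_hjb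
    (c lam δ β φ α : ℝ) (hc : 0 < c) (hlam : 0 < lam) (hδ : 0 < δ)
    (hβ : 0 < β) (hφ : 1 ≤ φ) (hα : 0 < α)
    (hpar : (δ + lam) ^ 2 ≥ c * α * lam) :
    ∀ x ≥ (0:ℝ),
      1 - deriv (fun t => t + c / (lam + δ)) x = 0 ∧
      sSup {z : ℝ | ∃ f ≥ (0:ℝ),
        z = ((x + f) + c / (lam + δ)) - (x + c / (lam + δ)) - φ * f} = 0 ∧
      c * deriv (fun t => t + c / (lam + δ)) x - (lam + δ) * (x + c / (lam + δ))
        + lam * ∫ y in (0:ℝ)..x, ((x - y) + c / (lam + δ)) * (α * Real.exp (-α * y)) ≤ 0 := by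
  intro x hx
  have hd : deriv (fun t => t + c / (lam + δ)) x = 1 := by
    simp [deriv_add_const]
  have hs : lam + δ > 0 := by linarith
  refine ⟨by rw [hd]; ring, ?_, ?_⟩
  · apply le_antisymm
    · apply Real.sSup_le
      · rintro z ⟨f, hf, rfl⟩
        nlinarith
      · exact le_refl 0
    · apply le_csSup
      · refine ⟨0, ?_⟩
        rintro z ⟨f, hf, rfl⟩
        nlinarith
      · exact ⟨0, le_refl 0, by ring⟩
  · rw [hd, integral_comp α (c / (lam + δ)) x hα]
    have hE1 : Real.exp (-α * x) ≤ 1 := by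
      have : -α * x ≤ 0 := by nlinarith
      calc Real.exp (-α*x) ≤ Real.exp 0 := Real.exp_le_exp.mpr this
        _ = 1 := Real.exp_zero
    have hE2 : 1 - Real.exp (-α * x) ≤ α * x := by
      nlinarith [Real.add_one_le_exp (-α * x)]
    have hE0 : 0 < Real.exp (-α * x) := Real.exp_pos _
    set E := Real.exp (-α * x)
    have key : c * 1 - (lam + δ) * (x + c / (lam + δ)) +
        lam * ((1/α - c/(lam+δ)) * E - (1/α - (x + c/(lam+δ))))
        = -δ * x + lam * ((1/α - c/(lam+δ)) * (E - 1)) := by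
      field_simp
      ring
    rw [key]
    rcases le_or_gt (c / (lam + δ)) (1/α) with hcase | hcase
    · have h1 : lam * ((1/α - c/(lam+δ)) * (E - 1)) ≤ 0 := by
        apply mul_nonpos_of_nonneg_of_nonpos (le_of_lt hlam)
        apply mul_nonpos_of_nonneg_of_nonpos (by linarith) (by linarith)
      nlinarith
    · have hA : 0 < c/(lam+δ) - 1/α := by linarith
      have h2 : lam * ((1/α - c/(lam+δ)) * (E - 1)) ≤ lam * ((c/(lam+δ) - 1/α) * (α * x)) := by
        have : (1/α - c/(lam+δ)) * (E - 1) = (c/(lam+δ) - 1/α) * (1 - E) := by ring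
        rw [this]
        apply mul_le_mul_of_nonneg_left _ (le_of_lt hlam)
        exact mul_le_mul_of_nonneg_left hE2 (le_of_lt hA)
      have h3 : -δ * x + lam * ((c/(lam+δ) - 1/α) * (α * x)) ≤ 0 := by
        have expand : -δ * x + lam * ((c/(lam+δ) - 1/α) * (α * x))
            = x * (c * α * lam - (δ + lam)^2) / (lam + δ) := by
          field_simp
          ring
        rw [expand]
        apply div_nonpos_of_nonpos_of_nonneg _ (le_of_lt hs)
        apply mul_nonpos_of_nonneg_of_nonpos hx (by linarith)
      linarith
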